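/- Let D be a probability distribution on a finite set S. If the collision probability of D (i.e., the probability that two independent samples from D are equal) is at most (1 + 2ε²)/|S|, then the statistical distance between D and the uniform distribution on S is at most ε. -/

import Mathlib

/-- Lemma of Impagliazzo–Zuckerman: if a distribution `D` on a finite
set `S` has collision probability `∑ s, D s ^ 2` at most `(1 + 2ε²)/|S|`, then its
statistical distance to the uniform distribution is at most `ε`. -/
theorem stmt_0 {S : Type*} [Fintype S] [Nonempty S] (D : S → ℝ)
    (hD0 : ∀ s, 0 ≤ D s) (hD1 : ∑ s, D s = 1)
    (ε : ℝ) (hε : 0 ≤ ε)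
    (hcoll : ∑ s, (D s) ^ 2 ≤ (1 + 2 * ε ^ 2) / (Fintype.card S)) :
    (1 / 2) * ∑ s, |D s - 1 / (Fintype.card S)| ≤ ε := by
  set n : ℝ := (Fintype.card S : ℝ) with hn
  have hnpos : (0 : ℝ) < n := by
    rw [hn]; exact Nat.cast_pos.mpr (Fintype.card_pos (α := S))
  have key : (∑ s, |D s - 1 / n|) ^ 2 ≤ n * ∑ s, (D s - 1 / n) ^ 2 := by
    calc (∑ s, |D s - 1 / n|) ^ 2
        = (∑ s, (1 : ℝ) * |D s - 1 / n|) ^ 2 := by simp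
      _ ≤ (∑ s, (1:ℝ)^2) * ∑ s, |D s - 1 / n| ^ 2 :=
          Finset.sum_mul_sq_le_sq_mul_sq _ _ _
      _ = n * ∑ s, (D s - 1 / n) ^ 2 := by
          simp [sq_abs, hn, Finset.card_univ]
  have hsum : ∑ s, (D s - 1 / n) ^ 2 = (∑ s, (D s) ^ 2) - 1 / n := by
    have e : ∀ s, (D s - 1/n)^2 = D s^2 - (2/n)*D s + 1/n^2 := by
      intro s; field_simp; ring
    rw [Finset.sum_congr rfl fun s _ => e s, Finset.sum_add_distrib,
      Finset.sum_sub_distrib, ← Finset.mul_sum, hD1, Finset.sum_const,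
      Finset.card_univ, nsmul_eq_mul, ← hn]
    field_simp
    ring
  have h2 : ∑ s, (D s - 1 / n) ^ 2 ≤ 2 * ε ^ 2 / n := by
    rw [hsum]
    have : (1 + 2 * ε ^ 2) / n - 1 / n = 2 * ε ^ 2 / n := by field_simp; ring
    linarith [hcoll, this]
  have h3 : (∑ s, |D s - 1 / n|) ^ 2 ≤ 2 * ε ^ 2 := by
    calc (∑ s, |D s - 1 / n|) ^ 2 ≤ n * ∑ s, (D s - 1 / n) ^ 2 := key
      _ ≤ n * (2 * ε ^ 2 / n) := by
          exact mul_le_mul_of_nonneg_left h2 hnpos.le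
      _ = 2 * ε ^ 2 := by field_simp
  have hA : 0 ≤ ∑ s, |D s - 1 / n| := Finset.sum_nonneg fun s _ => abs_nonneg _
  nlinarith [sq_nonneg (∑ s, |D s - 1 / n| - 2 * ε)]
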